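/- arXiv:1004.2939 — 3 statements merged into one kernel-verified Lean document; each statement's English description precedes it below -/
import Mathlib

section
/- Assume the separation and scale hypotheses. Let V ∈ 𝒱_m and ξ ∈ Ξ(V). Then Υ(ξ) ⊆ Ξ(V), every η ∈ Υ(ξ) satisfies η − ξ ∈ V, and |η − η'| ≤ 2·√m·L_m for all η, η' ∈ Υ(ξ); in particular Υ(ξ) has diameter at most 2√m·L_m. -/
open scoped RealInnerProductSpace
noncomputable section
/-- `V` is a quasi-lattice subspace of dimension `m` generated by the frequency set `Θ`. -/
def QL (d : ℕ) (Θ : Finset (EuclideanSpace ℝ (Fin d))) (m : ℕ)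
    (V : Submodule ℝ (EuclideanSpace ℝ (Fin d))) : Prop :=
  ∃ v : Fin m → EuclideanSpace ℝ (Fin d),
    (∀ i, v i ∈ Θ) ∧ LinearIndependent ℝ v ∧ V = Submodule.span ℝ (Set.range v)

/-- `V` is a quasi-lattice subspace (of some dimension). -/
def QLat (d : ℕ) (Θ : Finset (EuclideanSpace ℝ (Fin d)))
    (V : Submodule ℝ (EuclideanSpace ℝ (Fin d))) : Prop :=
  ∃ m, QL d Θ m V

/-- `Ξ₁(V)`: the union, over all flags `F` generated by `V` (with a generated sequence `ν`),
of the slabs `Λ(F) = {ξ : |⟪ξ, ν j⟫| ≤ L j}`. -/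
def XiOne (d : ℕ) (Θ : Finset (EuclideanSpace ℝ (Fin d))) (L : ℕ → ℝ)
    (V : Submodule ℝ (EuclideanSpace ℝ (Fin d))) : Set (EuclideanSpace ℝ (Fin d)) :=
  {ξ | ∃ (m : ℕ) (F : Fin (m + 1) → Submodule ℝ (EuclideanSpace ℝ (Fin d)))
        (ν : Fin m → EuclideanSpace ℝ (Fin d)),
      (∀ j : Fin (m + 1), QL d Θ (j : ℕ) (F j)) ∧
      (∀ i : Fin m, F i.castSucc < F i.succ) ∧
      F (Fin.last m) = V ∧
      (∀ i : Fin m, ‖ν i‖ = 1 ∧ ν i ∈ F i.succ ∧ ν i ∈ (F i.castSucc)ᗮ) ∧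
      (∀ i : Fin m, |⟪ξ, ν i⟫| ≤ L ((i : ℕ) + 1))}

/-- The resonance region `Ξ(V) = Ξ₁(V) \ ⋃_{U ⊋ V} Ξ₁(U)`. -/
def Xi (d : ℕ) (Θ : Finset (EuclideanSpace ℝ (Fin d))) (L : ℕ → ℝ)
    (V : Submodule ℝ (EuclideanSpace ℝ (Fin d))) : Set (EuclideanSpace ℝ (Fin d)) :=
  XiOne d Θ L V \
    ⋃ U ∈ {U : Submodule ℝ (EuclideanSpace ℝ (Fin d)) | QLat d Θ U ∧ V < U},
      XiOne d Θ L U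

/-- The resonance zone `Λ(θ) = {ξ : |⟪ξ, θ⟫| ≤ L 1 · ‖θ‖}` generated by `θ`. -/
def LamT (d : ℕ) (L : ℕ → ℝ) (θ : EuclideanSpace ℝ (Fin d)) :
    Set (EuclideanSpace ℝ (Fin d)) :=
  {ξ | |⟪ξ, θ⟫| ≤ L 1 * ‖θ‖}

/-- One step of resonant congruence: `ξ` and `η` are `θ`-resonant congruent for some
nonzero `θ ∈ Θ`, i.e. both lie in `Λ(θ)` and differ by an integer multiple of `θ`. -/
def ResStep (d : ℕ) (Θ : Finset (EuclideanSpace ℝ (Fin d))) (L : ℕ → ℝ)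
    (ξ η : EuclideanSpace ℝ (Fin d)) : Prop :=
  ∃ θ ∈ Θ, θ ≠ 0 ∧ ξ ∈ LamT d L θ ∧ η ∈ LamT d L θ ∧ ∃ l : ℤ, ξ - η = (l : ℝ) • θ

/-- `Υ(ξ)`: the set of all points resonant congruent to `ξ` (chains of resonant steps,
including the empty chain). -/
def Ups (d : ℕ) (Θ : Finset (EuclideanSpace ℝ (Fin d))) (L : ℕ → ℝ)
    (ξ : EuclideanSpace ℝ (Fin d)) : Set (EuclideanSpace ℝ (Fin d)) :=
  {η | Relation.ReflTransGen (ResStep d Θ L) ξ η}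

variable {d : ℕ} {Θ : Finset (EuclideanSpace ℝ (Fin d))} {L : ℕ → ℝ}
local notation "E" => EuclideanSpace ℝ (Fin d)

/-! ### Basic facts about quasi-lattice subspaces -/

lemma ql_finrank {m : ℕ} {V : Submodule ℝ E} (h : QL d Θ m V) :
    Module.finrank ℝ V = m := by
  obtain ⟨v, -, hli, rfl⟩ := h
  rw [finrank_span_eq_card hli, Fintype.card_fin]

lemma ql_zero {V : Submodule ℝ E} (h : QL d Θ 0 V) : V = ⊥ := by
  obtain ⟨v, -, -, rfl⟩ := h
  simp [Set.range_eq_empty]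

lemma ql_le_d {m : ℕ} {V : Submodule ℝ E} (h : QL d Θ m V) : m ≤ d := by
  have := ql_finrank h
  have h2 := Submodule.finrank_le V
  rw [this] at h2
  simpa [finrank_euclideanSpace_fin] using h2

lemma ql_span_singleton {θ : E} (hθ : θ ∈ Θ) (h0 : θ ≠ 0) :
    QL d Θ 1 (Submodule.span ℝ {θ}) := by
  refine ⟨fun _ => θ, fun _ => hθ, ?_, by simp⟩
  exact linearIndependent_unique_iff.2 h0

lemma ql_sup_span {n : ℕ} {W : Submodule ℝ E} (h : QL d Θ n W) {θ : E}
    (hθ : θ ∈ Θ) (hθW : θ ∉ W) : QL d Θ (n + 1) (Submodule.span ℝ {θ} ⊔ W) := by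
  obtain ⟨v, hv, hli, rfl⟩ := h
  refine ⟨Fin.cons θ v, ?_, ?_, ?_⟩
  · intro i
    refine Fin.cases ?_ ?_ i <;> simp [hθ, hv]
  · exact hli.fin_cons hθW
  · rw [Fin.range_cons, Submodule.span_insert]

lemma not_le_span_singleton {n : ℕ} {W : Submodule ℝ E} (h : QL d Θ n W) {θ : E}
    (hn : 1 ≤ n) (hθW : θ ∉ W) : ¬ W ≤ Submodule.span ℝ {θ} := by
  intro hle
  have h1 : Module.finrank ℝ (Submodule.span ℝ ({θ} : Set E)) ≤ 1 := by
    rcases eq_or_ne θ 0 with rfl | h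
    · rw [Submodule.span_zero_singleton]
      simp
    · rw [finrank_span_singleton h]
  have h2 : Module.finrank ℝ W = n := ql_finrank h
  have hn1 : n = 1 := by
    have := Submodule.finrank_mono hle
    omega
  have : W = Submodule.span ℝ {θ} := by
    refine Submodule.eq_of_le_of_finrank_le hle ?_
    omega
  apply hθW
  rw [this]
  exact Submodule.mem_span_singleton_self θ

/-! ### Orthogonal projection helpers -/

lemma exists_unit_orth {W₁ W₂ : Submodule ℝ E} (hle : W₁ ≤ W₂)
    (hr : Module.finrank ℝ W₁ < Module.finrank ℝ W₂) :
    ∃ v : E, ‖v‖ = 1 ∧ v ∈ W₂ ∧ v ∈ W₁ᗮ := by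
  have hsup := Submodule.sup_orthogonal_inf_of_hasOrthogonalProjection hle
  have hne : W₁ᗮ ⊓ W₂ ≠ ⊥ := by
    intro hb
    rw [hb, sup_bot_eq] at hsup
    rw [hsup] at hr
    omega
  obtain ⟨v, hv, hv0⟩ := Submodule.exists_mem_ne_zero_of_ne_bot hne
  refine ⟨‖v‖⁻¹ • v, ?_, ?_, ?_⟩
  · rw [norm_smul, norm_inv, norm_norm, inv_mul_cancel₀ (norm_ne_zero_iff.2 hv0)]
  · exact Submodule.smul_mem _ _ hv.2
  · exact Submodule.smul_mem _ _ hv.1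

lemma abs_inner_le_proj_norm {W : Submodule ℝ E} {ν : E} (hν : ν ∈ W) (hn : ‖ν‖ = 1)
    (η : E) : |⟪η, ν⟫| ≤ ‖(Submodule.orthogonalProjectionOnto W η : E)‖ := by
  have h0 : ⟪η - (Submodule.orthogonalProjectionOnto W η : E), ν⟫ = 0 :=
    Submodule.starProjection_inner_eq_zero (K := W) η ν hν
  rw [inner_sub_left, sub_eq_zero] at h0
  rw [h0]
  calc |⟪(Submodule.orthogonalProjectionOnto W η : E), ν⟫| ≤ ‖(Submodule.orthogonalProjectionOnto W η : E)‖ * ‖ν‖ :=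
        abs_real_inner_le_norm _ _
    _ = ‖(Submodule.orthogonalProjectionOnto W η : E)‖ := by rw [hn, mul_one]

lemma proj_eq_sum {n : ℕ} {W : Submodule ℝ E} {ν : Fin n → E}
    (hon : Orthonormal ℝ ν) (hspan : Submodule.span ℝ (Set.range ν) = W) (η : E) :
    (Submodule.orthogonalProjectionOnto W η : E) = ∑ i, ⟪η, ν i⟫ • ν i := by
  have hmem : (∑ i, ⟪η, ν i⟫ • ν i) ∈ W := by
    rw [← hspan]
    exact Submodule.sum_mem _ fun i _ =>
      Submodule.smul_mem _ _ (Submodule.subset_span ⟨i, rfl⟩)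
  have horth : ∀ w ∈ W, ⟪η - ∑ i, ⟪η, ν i⟫ • ν i, w⟫ = 0 := by
    intro w hw
    rw [← hspan] at hw
    refine Submodule.span_induction ?_ (by simp) ?_ ?_ hw
    · rintro _ ⟨j, rfl⟩
      rw [inner_sub_left, hon.inner_left_fintype]
      simp [real_inner_comm]
    · intro x y _ _ hx hy
      rw [inner_add_right, hx, hy, add_zero]
    · intro c x _ hx
      rw [inner_smul_right, hx, mul_zero]
  have := Submodule.eq_starProjection_of_mem_of_inner_eq_zero (K := W) hmem horth (u := η)
  exact this

lemma proj_norm_le_of_orthonormal {n : ℕ} {W : Submodule ℝ E} {ν : Fin n → E}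
    (hon : Orthonormal ℝ ν) (hspan : Submodule.span ℝ (Set.range ν) = W)
    {η : E} {C : ℝ} (hC : 0 ≤ C) (hb : ∀ i, |⟪η, ν i⟫| ≤ C) :
    ‖(Submodule.orthogonalProjectionOnto W η : E)‖ ≤ Real.sqrt n * C := by
  rw [proj_eq_sum hon hspan]
  have hsq : ‖∑ i, ⟪η, ν i⟫ • ν i‖ ^ 2 = ∑ i, ⟪η, ν i⟫ ^ 2 := by
    rw [← real_inner_self_eq_norm_sq, inner_sum]
    refine Finset.sum_congr rfl fun j _ => ?_
    rw [real_inner_smul_right, hon.inner_left_fintype]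
    simp [sq]
  have h1 : ‖∑ i, ⟪η, ν i⟫ • ν i‖ = Real.sqrt (∑ i, ⟪η, ν i⟫ ^ 2) := by
    rw [← hsq, Real.sqrt_sq (norm_nonneg _)]
  rw [h1, ← Real.sqrt_sq hC, ← Real.sqrt_mul (by positivity)]
  refine Real.sqrt_le_sqrt ?_
  calc ∑ i, ⟪η, ν i⟫ ^ 2 ≤ ∑ _i : Fin n, C ^ 2 := by
        refine Finset.sum_le_sum fun i _ => ?_
        rw [← sq_abs]
        exact pow_le_pow_left₀ (abs_nonneg _) (hb i) 2
    _ = n * C ^ 2 := by simp [mul_comm]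

/-! ### Monotonicity of `L` -/

lemma L_mono (hLmono : ∀ j, 1 ≤ j → j < d → L j ≤ L (j + 1)) :
    ∀ a b, 1 ≤ a → a ≤ b → b ≤ d → L a ≤ L b := by
  intro a b ha hab hbd
  induction b with
  | zero => omega
  | succ n ih =>
    rcases Nat.lt_or_ge a (n + 1) with h | h
    · have h1 : L a ≤ L n := ih (by omega) (by omega)
      exact h1.trans (hLmono n (by omega) (by omega))
    · have : a = n + 1 := by omega
      rw [this]

lemma L_pos (hL1 : 0 < L 1) (hLmono : ∀ j, 1 ≤ j → j < d → L j ≤ L (j + 1)) :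
    ∀ a, 1 ≤ a → a ≤ d → 0 < L a := fun a ha had =>
  hL1.trans_le (L_mono hLmono 1 a le_rfl ha had)

/-! ### Flags -/

lemma flag_mono {u : ℕ} {G : Fin (u + 1) → Submodule ℝ E}
    (hlt : ∀ i : Fin u, G i.castSucc < G i.succ) : Monotone G :=
  (Fin.strictMono_iff_lt_succ.2 hlt).monotone

lemma flag_orthonormal {u : ℕ} {G : Fin (u + 1) → Submodule ℝ E} {μ : Fin u → E}
    (hlt : ∀ i : Fin u, G i.castSucc < G i.succ)
    (hν : ∀ i : Fin u, ‖μ i‖ = 1 ∧ μ i ∈ G i.succ ∧ μ i ∈ (G i.castSucc)ᗮ) :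
    Orthonormal ℝ μ := by
  have hmono := flag_mono hlt
  rw [orthonormal_iff_ite]
  have key : ∀ i j : Fin u, i < j → ⟪μ i, μ j⟫ = 0 := by
    intro i j hij
    have h1 : μ i ∈ G j.castSucc :=
      hmono (Fin.succ_le_castSucc_iff.2 hij) (hν i).2.1
    exact ((hν j).2.2 (μ i) h1)
  intro i j
  rcases lt_trichotomy i j with h | h | h
  · rw [key i j h, if_neg h.ne]
  · subst h
    rw [if_pos rfl, real_inner_self_eq_norm_mul_norm, (hν i).1, one_mul]
  · rw [real_inner_comm, key j i h, if_neg h.ne']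

/-- The first `n` vectors of a flag sequence span the `n`-th flag subspace. -/
lemma flag_span_trunc {u : ℕ} {G : Fin (u + 1) → Submodule ℝ E} {μ : Fin u → E}
    (hQL : ∀ j : Fin (u + 1), QL d Θ (j : ℕ) (G j))
    (hlt : ∀ i : Fin u, G i.castSucc < G i.succ)
    (hν : ∀ i : Fin u, ‖μ i‖ = 1 ∧ μ i ∈ G i.succ ∧ μ i ∈ (G i.castSucc)ᗮ)
    (n : Fin (u + 1)) :
    Submodule.span ℝ (Set.range fun i : Fin n => μ (Fin.castLE (Nat.lt_succ_iff.1 n.2) i))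
      = G n := by
  have hmono := flag_mono hlt
  set f : Fin n → E := fun i => μ (Fin.castLE (Nat.lt_succ_iff.1 n.2) i) with hf
  have hle : Submodule.span ℝ (Set.range f) ≤ G n := by
    rw [Submodule.span_le]
    rintro _ ⟨i, rfl⟩
    have h1 : μ (Fin.castLE (Nat.lt_succ_iff.1 n.2) i) ∈
        G (Fin.castLE (Nat.lt_succ_iff.1 n.2) i).succ := (hν _).2.1
    refine hmono ?_ h1
    rw [Fin.le_def]
    exact i.2
  refine Submodule.eq_of_le_of_finrank_le hle ?_
  have hon : Orthonormal ℝ f := (flag_orthonormal hlt hν).comp _ (fun a b h => by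
    simpa [Fin.ext_iff] using congrArg (fun x : Fin u => (x : ℕ)) h)
  have hli : LinearIndependent ℝ f := hon.linearIndependent
  rw [finrank_span_eq_card hli, Fintype.card_fin, ql_finrank (hQL n)]

/-- Bound on the projection to a flag subspace. -/
lemma flag_proj_bound (hL1 : 0 < L 1) (hLmono : ∀ j, 1 ≤ j → j < d → L j ≤ L (j + 1))
    {u : ℕ} {G : Fin (u + 1) → Submodule ℝ E} {μ : Fin u → E} {η : E}
    (hud : u ≤ d)
    (hQL : ∀ j : Fin (u + 1), QL d Θ (j : ℕ) (G j))
    (hlt : ∀ i : Fin u, G i.castSucc < G i.succ)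
    (hν : ∀ i : Fin u, ‖μ i‖ = 1 ∧ μ i ∈ G i.succ ∧ μ i ∈ (G i.castSucc)ᗮ)
    (hbd : ∀ i : Fin u, |⟪η, μ i⟫| ≤ L ((i : ℕ) + 1))
    (n : Fin (u + 1)) :
    ‖(Submodule.orthogonalProjectionOnto (G n) η : E)‖ ≤ Real.sqrt n * L n := by
  rcases Nat.eq_zero_or_pos (n : ℕ) with h0 | hpos
  · have hn0 : n = 0 := by
      rwa [Fin.ext_iff]
    have : G n = ⊥ := by
      apply ql_zero
      have := hQL n
      rwa [hn0] at this ⊢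
    rw [this, hn0]
    simp
  · have hC : 0 ≤ L n := (L_pos hL1 hLmono n hpos (le_trans (Nat.lt_succ_iff.1 n.2) hud)).le
    have hon : Orthonormal ℝ (fun i : Fin n => μ (Fin.castLE (Nat.lt_succ_iff.1 n.2) i)) :=
      (flag_orthonormal hlt hν).comp _ (fun a b h => by
        simpa [Fin.ext_iff] using congrArg (fun x : Fin u => (x : ℕ)) h)
    refine proj_norm_le_of_orthonormal hon (flag_span_trunc hQL hlt hν n) hC ?_
    intro i
    refine (hbd _).trans ?_
    exact L_mono hLmono _ _ (by omega) i.2 (le_trans (Nat.lt_succ_iff.1 n.2) hud)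

/-! ### Extracting a flag of the right length -/

lemma xione_flag {m : ℕ} {V : Submodule ℝ E} (hV : QL d Θ m V) {ξ : E}
    (hξ : ξ ∈ XiOne d Θ L V) :
    ∃ (F : Fin (m + 1) → Submodule ℝ E) (ν : Fin m → E),
      (∀ j : Fin (m + 1), QL d Θ (j : ℕ) (F j)) ∧
      (∀ i : Fin m, F i.castSucc < F i.succ) ∧
      F (Fin.last m) = V ∧
      (∀ i : Fin m, ‖ν i‖ = 1 ∧ ν i ∈ F i.succ ∧ ν i ∈ (F i.castSucc)ᗮ) ∧
      (∀ i : Fin m, |⟪ξ, ν i⟫| ≤ L ((i : ℕ) + 1)) := by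
  obtain ⟨m', F, ν, hQL, hlt, hlast, hν, hbd⟩ := hξ
  have hm : m' = m := by
    have h1 : QL d Θ m' V := by
      have := hQL (Fin.last m')
      rwa [hlast, Fin.val_last] at this
    rw [← ql_finrank h1, ql_finrank hV]
  subst hm
  exact ⟨F, ν, hQL, hlt, hlast, hν, hbd⟩

lemma xione_proj_bound (hL1 : 0 < L 1) (hLmono : ∀ j, 1 ≤ j → j < d → L j ≤ L (j + 1))
    {m : ℕ} {V : Submodule ℝ E} (hV : QL d Θ m V) {η : E} (hη : η ∈ XiOne d Θ L V) :
    ‖(Submodule.orthogonalProjectionOnto V η : E)‖ ≤ Real.sqrt m * L m := by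
  obtain ⟨F, ν, hQL, hlt, hlast, hν, hbd⟩ := xione_flag hV hη
  have := flag_proj_bound hL1 hLmono (ql_le_d hV) hQL hlt hν hbd (Fin.last m)
  rwa [hlast, Fin.val_last] at this

/-! ### Projection onto the line spanned by `θ` -/

lemma proj_span_theta_bound {θ : E} (hθ0 : θ ≠ 0) {ξ : E} (hξθ : ξ ∈ LamT d L θ) :
    ‖(Submodule.orthogonalProjectionOnto (Submodule.span ℝ {θ}) ξ : E)‖ ≤ L 1 := by
  show ‖(Submodule.span ℝ {θ}).starProjection ξ‖ ≤ L 1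
  rw [Submodule.starProjection_singleton]
  simp only [RCLike.ofReal_real_eq_id, id_eq]
  rw [norm_smul, norm_div, Real.norm_eq_abs, Real.norm_eq_abs,
    abs_of_nonneg (by positivity : (0:ℝ) ≤ ‖θ‖ ^ 2)]
  have hθn : 0 < ‖θ‖ := norm_pos_iff.2 hθ0
  have h1 : |⟪θ, ξ⟫| ≤ L 1 * ‖θ‖ := by rw [real_inner_comm]; exact hξθ
  rw [div_mul_eq_mul_div, div_le_iff₀ (by positivity)]
  nlinarith

/-! ### The key separation bound -/

lemma sep_bound (hL1 : 0 < L 1) (hLmono : ∀ j, 1 ≤ j → j < d → L j ≤ L (j + 1))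
    {s : ℝ} (hs0 : 0 < s) (hs1 : s ≤ 1)
    (hsep : ∀ U V : Submodule ℝ (EuclideanSpace ℝ (Fin d)), QLat d Θ U → QLat d Θ V →
      ¬ U ≤ V → ¬ V ≤ U → ∀ ξ : EuclideanSpace ℝ (Fin d),
        ‖(Submodule.orthogonalProjectionOnto (U ⊔ V) ξ : EuclideanSpace ℝ (Fin d))‖ ≤
          (‖(Submodule.orthogonalProjectionOnto U ξ : EuclideanSpace ℝ (Fin d))‖ +
            ‖(Submodule.orthogonalProjectionOnto V ξ : EuclideanSpace ℝ (Fin d))‖) / s)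
    {R : ℝ} (hR0 : 0 ≤ R)
    (hscale : ∀ j, 1 ≤ j → j + 1 ≤ d → 2 * d * L j / s + R ≤ L (j + 1))
    {θ : E} (hθ : θ ∈ Θ) (hθ0 : θ ≠ 0) {n : ℕ} {W : Submodule ℝ E}
    (hW : QL d Θ n W) (hn : 1 ≤ n) (hnd : n + 1 ≤ d) (hθW : θ ∉ W) {η : E}
    (hηθ : η ∈ LamT d L θ)
    (hPW : ‖(Submodule.orthogonalProjectionOnto W η : E)‖ ≤ Real.sqrt n * L n) :
    ‖(Submodule.orthogonalProjectionOnto (Submodule.span ℝ {θ} ⊔ W) η : E)‖ ≤ L (n + 1) := by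
  have hLn : 0 < L n := L_pos hL1 hLmono n hn (by omega)
  have h1 : ¬ Submodule.span ℝ {θ} ≤ W := by
    rwa [Submodule.span_singleton_le_iff_mem]
  have h2 : ¬ W ≤ Submodule.span ℝ {θ} := not_le_span_singleton hW hn hθW
  have hmain := hsep _ _ ⟨1, ql_span_singleton hθ hθ0⟩ ⟨n, hW⟩ h1 h2 η
  clear h1 h2
  have hPθ := proj_span_theta_bound hθ0 hηθ
  have hsqrt : Real.sqrt n ≤ (n : ℝ) := by
    have h0 : (0:ℝ) ≤ n := by positivity
    have h1 : (1:ℝ) ≤ n := by exact_mod_cast hn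
    nlinarith [Real.sq_sqrt h0, Real.sqrt_nonneg (n : ℝ)]
  have hL1n : L 1 ≤ L n := L_mono hLmono 1 n le_rfl hn (by omega)
  have hnd' : (n : ℝ) + 1 ≤ (d : ℝ) := by exact_mod_cast hnd
  have hd1 : (1 : ℝ) ≤ (d : ℝ) := by
    have : 1 ≤ d := by omega
    exact_mod_cast this
  have hnum : ‖(Submodule.orthogonalProjectionOnto (Submodule.span ℝ {θ}) η : E)‖ +
      ‖(Submodule.orthogonalProjectionOnto W η : E)‖ ≤ 2 * d * L n := by
    have hWn : ‖(Submodule.orthogonalProjectionOnto W η : E)‖ ≤ (n : ℝ) * L n :=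
      hPW.trans (mul_le_mul_of_nonneg_right hsqrt hLn.le)
    have : L 1 + (n : ℝ) * L n ≤ 2 * d * L n := by nlinarith
    linarith
  have harith : (‖(Submodule.orthogonalProjectionOnto (Submodule.span ℝ {θ}) η : E)‖ +
      ‖(Submodule.orthogonalProjectionOnto W η : E)‖) / s ≤ 2 * d * L n / s := by gcongr
  refine hmain.trans (harith.trans ?_)
  have := hscale n hn hnd
  linarith

lemma ql_bot : QL d Θ 0 (⊥ : Submodule ℝ E) := by
  refine ⟨fun i => i.elim0, fun i => i.elim0, ?_, by simp [Set.range_eq_empty]⟩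
  exact linearIndependent_empty_type

lemma proj_congr {W W' : Submodule ℝ E} (h : W = W') (η : E) :
    (Submodule.orthogonalProjectionOnto W η : E) = (Submodule.orthogonalProjectionOnto W' η : E) := by
  subst h; rfl

/-! ### The transfer lemma -/

lemma transfer (hL1 : 0 < L 1) (hLmono : ∀ j, 1 ≤ j → j < d → L j ≤ L (j + 1))
    {s : ℝ} (hs0 : 0 < s) (hs1 : s ≤ 1)
    (hsep : ∀ U V : Submodule ℝ (EuclideanSpace ℝ (Fin d)), QLat d Θ U → QLat d Θ V →
      ¬ U ≤ V → ¬ V ≤ U → ∀ ξ : EuclideanSpace ℝ (Fin d),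
        ‖(Submodule.orthogonalProjectionOnto (U ⊔ V) ξ : EuclideanSpace ℝ (Fin d))‖ ≤
          (‖(Submodule.orthogonalProjectionOnto U ξ : EuclideanSpace ℝ (Fin d))‖ +
            ‖(Submodule.orthogonalProjectionOnto V ξ : EuclideanSpace ℝ (Fin d))‖) / s)
    {R : ℝ} (hR0 : 0 ≤ R)
    (hscale : ∀ j, 1 ≤ j → j + 1 ≤ d → 2 * d * L j / s + R ≤ L (j + 1))
    {u : ℕ} {U : Submodule ℝ E} (hU : QL d Θ u U)
    {θ : E} (hθ : θ ∈ Θ) (hθ0 : θ ≠ 0) (hθU : θ ∈ U)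
    {ξ η : E} (hηθ : η ∈ LamT d L θ) (hξθ : ξ ∈ LamT d L θ)
    {r : ℝ} (hr : ξ - η = r • θ)
    (hη : η ∈ XiOne d Θ L U) : ξ ∈ XiOne d Θ L U := by
  classical
  obtain ⟨G, μ, hQL, hlt, hlast, hν, hbd⟩ := xione_flag hU hη
  have hud : u ≤ d := ql_le_d hU
  -- the flag as a function of natural numbers
  set Gn : ℕ → Submodule ℝ E := fun n => G ⟨min n u, by omega⟩ with hGn_def
  have hGn_eq : ∀ (n : ℕ) (hn : n ≤ u), Gn n = G ⟨n, by omega⟩ := by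
    intro n hn
    simp only [hGn_def]
    congr 1
    exact Fin.ext (min_eq_left hn)
  have hGn_mono : ∀ a b : ℕ, a ≤ b → Gn a ≤ Gn b := by
    intro a b hab
    exact flag_mono hlt (by simp [Fin.le_def]; omega)
  have hGn_QL : ∀ n : ℕ, n ≤ u → QL d Θ n (Gn n) := by
    intro n hn
    rw [hGn_eq n hn]
    exact hQL ⟨n, by omega⟩
  have hGn_u : Gn u = U := by
    rw [hGn_eq u le_rfl, ← hlast]
    congr 1
  -- the least `k` with `θ ∈ Gn k`
  have hkex : ∃ n, θ ∈ Gn n := ⟨u, by rwa [hGn_u]⟩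
  set k := Nat.find hkex with hk_def
  have hk : θ ∈ Gn k := Nat.find_spec hkex
  have hk_min : ∀ n, n < k → θ ∉ Gn n := fun n hn => Nat.find_min hkex hn
  have hk_le : k ≤ u := Nat.find_min' hkex (by rwa [hGn_u])
  have hk1 : 1 ≤ k := by
    rcases Nat.eq_zero_or_pos k with h | h
    · exfalso
      rw [h] at hk
      rw [ql_zero (hGn_QL 0 (by omega))] at hk
      exact hθ0 (by simpa using hk)
    · exact h
  -- the modified flag
  set Fn : ℕ → Submodule ℝ E := fun n =>
    if n = 0 then ⊥ else if n < k then Submodule.span ℝ {θ} ⊔ Gn (n - 1) else Gn n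
    with hFn_def
  have hFn0 : Fn 0 = ⊥ := by simp [hFn_def]
  have hFn_mid : ∀ n, 1 ≤ n → n < k → Fn n = Submodule.span ℝ {θ} ⊔ Gn (n - 1) := by
    intro n h1 h2
    simp only [hFn_def]
    rw [if_neg (by omega), if_pos h2]
  have hFn_tail : ∀ n, k ≤ n → Fn n = Gn n := by
    intro n h1
    simp only [hFn_def]
    rw [if_neg (by omega), if_neg (by omega)]
  have hkey : Submodule.span ℝ {θ} ⊔ Gn (k - 1) = Gn k := by
    have hle : Submodule.span ℝ {θ} ⊔ Gn (k - 1) ≤ Gn k := by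
      refine sup_le ?_ (hGn_mono (k - 1) k (by omega))
      rw [Submodule.span_singleton_le_iff_mem]
      exact hk
    refine Submodule.eq_of_le_of_finrank_le hle ?_
    have h1 := ql_sup_span (hGn_QL (k - 1) (by omega)) hθ (hk_min (k - 1) (by omega))
    have h2 : k - 1 + 1 = k := by omega
    rw [h2] at h1
    rw [ql_finrank h1, ql_finrank (hGn_QL k hk_le)]
  -- `Fn n = span {θ} ⊔ Gn (n-1)` for all `1 ≤ n ≤ k`
  have hFn_mid' : ∀ n, 1 ≤ n → n ≤ k → Fn n = Submodule.span ℝ {θ} ⊔ Gn (n - 1) := by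
    intro n h1 h2
    rcases Nat.lt_or_ge n k with h3 | h3
    · exact hFn_mid n h1 h3
    · have h4 : n = k := by omega
      rw [h4, hFn_tail k le_rfl, ← hkey]
  have hθFn : ∀ n, 1 ≤ n → θ ∈ Fn n := by
    intro n hn
    rcases Nat.lt_or_ge n k with h | h
    · rw [hFn_mid n hn h]
      exact Submodule.mem_sup_left (Submodule.mem_span_singleton_self θ)
    · rw [hFn_tail n h]
      exact hGn_mono k n h hk
  have hFn_QL : ∀ n, n ≤ u → QL d Θ n (Fn n) := by
    intro n hn
    rcases Nat.eq_zero_or_pos n with rfl | h1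
    · rw [hFn0]; exact ql_bot
    rcases Nat.lt_or_ge n k with h | h
    · rw [hFn_mid n h1 h]
      have h3 := ql_sup_span (hGn_QL (n - 1) (by omega)) hθ (hk_min (n - 1) (by omega))
      have h4 : n - 1 + 1 = n := by omega
      rwa [h4] at h3
    · rw [hFn_tail n h]
      exact hGn_QL n hn
  have hFn_fr : ∀ n, n ≤ u → Module.finrank ℝ (Fn n) = n := fun n hn =>
    ql_finrank (hFn_QL n hn)
  have hFn_le : ∀ n, n < u → Fn n ≤ Fn (n + 1) := by
    intro n hn
    rcases Nat.eq_zero_or_pos n with rfl | hn0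
    · rw [hFn0]; exact bot_le
    rcases Nat.lt_or_ge (n + 1) k with h1 | h1
    · rw [hFn_mid n (by omega) (by omega), hFn_mid (n + 1) (by omega) h1]
      exact sup_le_sup le_rfl (hGn_mono (n - 1) (n + 1 - 1) (by omega))
    rcases Nat.lt_or_ge n k with h2 | h2
    · -- n < k ≤ n + 1, so k = n + 1
      rw [hFn_mid n (by omega) h2, hFn_mid' (n + 1) (by omega) (by omega)]
      exact sup_le_sup le_rfl (hGn_mono (n - 1) (n + 1 - 1) (by omega))
    · rw [hFn_tail n h2, hFn_tail (n + 1) (by omega)]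
      exact hGn_mono n (n + 1) (by omega)
  have hFn_lt : ∀ n, n < u → Fn n < Fn (n + 1) := by
    intro n hn
    refine Submodule.lt_of_le_of_finrank_lt_finrank (hFn_le n hn) ?_
    rw [hFn_fr n (by omega), hFn_fr (n + 1) (by omega)]
    omega
  -- existence of the generated sequence
  have hexists : ∀ j : Fin u, ∃ w : E, ‖w‖ = 1 ∧ w ∈ Fn ((j : ℕ) + 1) ∧
      w ∈ (Fn (j : ℕ))ᗮ ∧ |⟪ξ, w⟫| ≤ L ((j : ℕ) + 1) := by
    intro j
    have hnu : (j : ℕ) < u := j.2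
    rcases Nat.eq_zero_or_pos (j : ℕ) with hn0 | hn0
    · -- first step: direction `θ`
      have hθn : 0 < ‖θ‖ := norm_pos_iff.2 hθ0
      rw [hn0]
      refine ⟨‖θ‖⁻¹ • θ, ?_, ?_, ?_, ?_⟩
      · rw [norm_smul, norm_inv, norm_norm, inv_mul_cancel₀ hθn.ne']
      · rw [zero_add]
        exact Submodule.smul_mem _ _ (hθFn 1 le_rfl)
      · rw [hFn0]
        intro x hx
        rw [Submodule.mem_bot] at hx
        simp [hx]
      · rw [zero_add, real_inner_smul_right, abs_mul, abs_of_nonneg (by positivity)]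
        calc ‖θ‖⁻¹ * |⟪ξ, θ⟫| ≤ ‖θ‖⁻¹ * (L 1 * ‖θ‖) :=
              mul_le_mul_of_nonneg_left hξθ (by positivity)
          _ = L 1 := by field_simp
    rcases Nat.lt_or_ge (j : ℕ) k with hnk | hnk
    · -- middle steps: new directions, controlled by the separation bound
      obtain ⟨w, hw1, hw2, hw3⟩ := exists_unit_orth (hFn_le (j : ℕ) hnu)
        (by rw [hFn_fr (j : ℕ) (by omega), hFn_fr ((j : ℕ) + 1) (by omega)]; omega)
      refine ⟨w, hw1, hw2, hw3, ?_⟩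
      have hξη : ⟪ξ, w⟫ = ⟪η, w⟫ := by
        have h1 : ⟪ξ - η, w⟫ = 0 := by
          rw [hr, real_inner_smul_left, hw3 θ (hθFn (j : ℕ) hn0), mul_zero]
        rw [inner_sub_left] at h1
        linarith
      have hsup : Fn ((j : ℕ) + 1) = Submodule.span ℝ {θ} ⊔ Gn (j : ℕ) := by
        have h5 := hFn_mid' ((j : ℕ) + 1) (by omega) (by omega)
        simpa using h5
      rw [hsup] at hw2
      have hPG : ‖(Submodule.orthogonalProjectionOnto (Gn (j : ℕ)) η : E)‖ ≤
          Real.sqrt (j : ℕ) * L (j : ℕ) := by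
        rw [proj_congr (hGn_eq (j : ℕ) (by omega)) η]
        exact flag_proj_bound hL1 hLmono hud hQL hlt hν hbd ⟨(j : ℕ), by omega⟩
      have hfin := sep_bound hL1 hLmono hs0 hs1 hsep hR0 hscale hθ hθ0
        (hGn_QL (j : ℕ) (by omega)) hn0 (by omega) (hk_min (j : ℕ) hnk) hηθ hPG
      rw [hξη]
      exact (abs_inner_le_proj_norm hw2 hw1 η).trans hfin
    · -- tail: reuse the original flag sequence
      have hGc : Fn (j : ℕ) = G j.castSucc := by
        calc Fn (j : ℕ) = Gn (j : ℕ) := hFn_tail _ hnk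
          _ = G ⟨(j : ℕ), by omega⟩ := hGn_eq _ (by omega)
          _ = G j.castSucc := congrArg G (Fin.ext (by simp))
      have hGs : Fn ((j : ℕ) + 1) = G j.succ := by
        calc Fn ((j : ℕ) + 1) = Gn ((j : ℕ) + 1) := hFn_tail _ (by omega)
          _ = G ⟨(j : ℕ) + 1, by omega⟩ := hGn_eq _ (by omega)
          _ = G j.succ := congrArg G (Fin.ext (by simp))
      refine ⟨μ j, (hν j).1, ?_, ?_, ?_⟩
      · rw [hGs]; exact (hν j).2.1
      · rw [hGc]; exact (hν j).2.2
      · have hθG : θ ∈ G j.castSucc := by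
          rw [← hGc, hFn_tail (j : ℕ) hnk]
          exact hGn_mono k (j : ℕ) hnk hk
        have hξη : ⟪ξ, μ j⟫ = ⟪η, μ j⟫ := by
          have h1 : ⟪ξ - η, μ j⟫ = 0 := by
            rw [hr, real_inner_smul_left, (hν j).2.2 θ hθG, mul_zero]
          rw [inner_sub_left] at h1
          linarith
        rw [hξη]
        exact hbd j
  choose ν' hν'1 hν'2 hν'3 hν'4 using hexists
  refine ⟨u, fun j => Fn (j : ℕ), ν', ?_, ?_, ?_, ?_, ?_⟩
  · intro j
    exact hFn_QL (j : ℕ) (Nat.lt_succ_iff.1 j.2)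
  · intro i
    have := hFn_lt (i : ℕ) i.2
    simpa [Fin.coe_castSucc, Fin.val_succ] using this
  · show Fn ((Fin.last u : Fin (u + 1)) : ℕ) = U
    rw [Fin.val_last, hFn_tail u hk_le, hGn_u]
  · intro i
    exact ⟨hν'1 i, by simpa [Fin.val_succ] using hν'2 i, by simpa using hν'3 i⟩
  · intro i
    exact hν'4 i

/-! ### `θ`-resonance forces `θ ∈ V` on `Ξ(V)` -/

lemma theta_mem (hL1 : 0 < L 1) (hLmono : ∀ j, 1 ≤ j → j < d → L j ≤ L (j + 1))
    {s : ℝ} (hs0 : 0 < s) (hs1 : s ≤ 1)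
    (hsep : ∀ U V : Submodule ℝ (EuclideanSpace ℝ (Fin d)), QLat d Θ U → QLat d Θ V →
      ¬ U ≤ V → ¬ V ≤ U → ∀ ξ : EuclideanSpace ℝ (Fin d),
        ‖(Submodule.orthogonalProjectionOnto (U ⊔ V) ξ : EuclideanSpace ℝ (Fin d))‖ ≤
          (‖(Submodule.orthogonalProjectionOnto U ξ : EuclideanSpace ℝ (Fin d))‖ +
            ‖(Submodule.orthogonalProjectionOnto V ξ : EuclideanSpace ℝ (Fin d))‖) / s)
    {R : ℝ} (hR0 : 0 ≤ R)
    (hscale : ∀ j, 1 ≤ j → j + 1 ≤ d → 2 * d * L j / s + R ≤ L (j + 1))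
    {m : ℕ} {V : Submodule ℝ E} (hV : QL d Θ m V)
    {θ : E} (hθ : θ ∈ Θ) (hθ0 : θ ≠ 0)
    {ξ : E} (hξ : ξ ∈ Xi d Θ L V) (hξθ : ξ ∈ LamT d L θ) : θ ∈ V := by
  by_contra hθV
  obtain ⟨hξ1, hξ2⟩ := hξ
  apply hξ2
  set W : Submodule ℝ E := Submodule.span ℝ {θ} ⊔ V with hW_def
  have hW : QL d Θ (m + 1) W := ql_sup_span hV hθ hθV
  have hθW : θ ∈ W := Submodule.mem_sup_left (Submodule.mem_span_singleton_self θ)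
  have hVW : V < W := by
    refine lt_of_le_of_ne le_sup_right fun h => hθV ?_
    rw [h]; exact hθW
  -- the projection bound for the new direction
  have hPW : ‖(Submodule.orthogonalProjectionOnto W ξ : E)‖ ≤ L (m + 1) := by
    rcases Nat.eq_zero_or_pos m with rfl | hm
    · have hVbot : V = ⊥ := ql_zero hV
      have hWs : W = Submodule.span ℝ {θ} := by rw [hW_def, hVbot, sup_bot_eq]
      rw [proj_congr hWs ξ]
      exact proj_span_theta_bound hθ0 hξθ
    · exact sep_bound hL1 hLmono hs0 hs1 hsep hR0 hscale hθ hθ0 hV hm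
        (ql_le_d hW) hθV hξθ (xione_proj_bound hL1 hLmono hV hξ1)
  -- build the extended flag
  obtain ⟨F, ν, hQL, hlt, hlast, hν, hbd⟩ := xione_flag hV hξ1
  obtain ⟨w, hw1, hw2, hw3⟩ := exists_unit_orth (le_sup_right : V ≤ W)
    (by rw [ql_finrank hV, ql_finrank hW]; omega)
  have hbw : |⟪ξ, w⟫| ≤ L (m + 1) := (abs_inner_le_proj_norm hw2 hw1 ξ).trans hPW
  have hmem : ξ ∈ XiOne d Θ L W := by
    refine ⟨m + 1, Fin.snoc F W, Fin.snoc ν w, ?_, ?_, ?_, ?_, ?_⟩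
    · intro j
      refine Fin.lastCases ?_ ?_ j
      · rw [Fin.snoc_last, Fin.val_last]
        exact hW
      · intro i
        rw [Fin.snoc_castSucc, Fin.coe_castSucc]
        exact hQL i
    · intro i
      refine Fin.lastCases ?_ ?_ i
      · rw [Fin.succ_last, Fin.snoc_last, Fin.snoc_castSucc, hlast]
        exact hVW
      · intro i'
        rw [Fin.succ_castSucc, Fin.snoc_castSucc, Fin.snoc_castSucc]
        exact hlt i'
    · rw [Fin.snoc_last]
    · intro i
      refine Fin.lastCases ?_ ?_ i
      · refine ⟨by rw [Fin.snoc_last]; exact hw1, ?_, ?_⟩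
        · rw [Fin.snoc_last, Fin.succ_last, Fin.snoc_last]
          exact hw2
        · rw [Fin.snoc_last, Fin.snoc_castSucc, hlast]
          exact hw3
      · intro i'
        refine ⟨by rw [Fin.snoc_castSucc]; exact (hν i').1, ?_, ?_⟩
        · rw [Fin.snoc_castSucc, Fin.succ_castSucc, Fin.snoc_castSucc]
          exact (hν i').2.1
        · rw [Fin.snoc_castSucc, Fin.snoc_castSucc]
          exact (hν i').2.2
    · intro i
      refine Fin.lastCases ?_ ?_ i
      · rw [Fin.snoc_last, Fin.val_last]
        exact hbw
      · intro i'
        rw [Fin.snoc_castSucc, Fin.coe_castSucc]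
        exact hbd i'
  exact Set.mem_biUnion (by exact ⟨⟨m + 1, hW⟩, hVW⟩) hmem

theorem ups_subset_xi_and_diameter (d : ℕ) (hd : 1 ≤ d)
    (Θ : Finset (EuclideanSpace ℝ (Fin d)))
    (h0 : (0 : EuclideanSpace ℝ (Fin d)) ∈ Θ)
    (hsym : ∀ θ ∈ Θ, -θ ∈ Θ)
    (hspan : Submodule.span ℝ (Θ : Set (EuclideanSpace ℝ (Fin d))) = ⊤)
    (L : ℕ → ℝ) (hL1 : 0 < L 1)
    (hLmono : ∀ j, 1 ≤ j → j < d → L j ≤ L (j + 1))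
    (s : ℝ) (hs0 : 0 < s) (hs1 : s ≤ 1)
    (hsep : ∀ U V : Submodule ℝ (EuclideanSpace ℝ (Fin d)), QLat d Θ U → QLat d Θ V →
      ¬ U ≤ V → ¬ V ≤ U → ∀ ξ : EuclideanSpace ℝ (Fin d),
        ‖(Submodule.orthogonalProjectionOnto (U ⊔ V) ξ : EuclideanSpace ℝ (Fin d))‖ ≤
          (‖(Submodule.orthogonalProjectionOnto U ξ : EuclideanSpace ℝ (Fin d))‖ +
            ‖(Submodule.orthogonalProjectionOnto V ξ : EuclideanSpace ℝ (Fin d))‖) / s)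
    (R : ℝ) (hR : ∀ θ ∈ Θ, ‖θ‖ ≤ R)
    (hscale : ∀ j, 1 ≤ j → j + 1 ≤ d → 2 * d * L j / s + R ≤ L (j + 1))
    (m : ℕ) (V : Submodule ℝ (EuclideanSpace ℝ (Fin d))) (hV : QL d Θ m V)
    (ξ : EuclideanSpace ℝ (Fin d)) (hξ : ξ ∈ Xi d Θ L V) :
    (∀ η ∈ Ups d Θ L ξ, η ∈ Xi d Θ L V ∧ η - ξ ∈ V) ∧
    (∀ η ∈ Ups d Θ L ξ, ∀ η' ∈ Ups d Θ L ξ,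
      ‖η - η'‖ ≤ 2 * Real.sqrt m * L m) := by
  have hR0 : 0 ≤ R := by
    have := hR 0 h0
    simpa using this
  have main : ∀ η ∈ Ups d Θ L ξ, η ∈ Xi d Θ L V ∧ η - ξ ∈ V := by
    intro η hη
    have hη' : Relation.ReflTransGen (ResStep d Θ L) ξ η := hη
    clear hη
    induction hη' with
    | refl => exact ⟨hξ, by simp⟩
    | @tail b c hab hbc ih =>
      obtain ⟨hbXi, hbV⟩ := ih
      obtain ⟨θ, hθΘ, hθ0, hbθ, hcθ, l, hl⟩ := hbc
      have hθV : θ ∈ V :=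
        theta_mem hL1 hLmono hs0 hs1 hsep hR0 hscale hV hθΘ hθ0 hbXi hbθ
      have hcb : c - b = (-(l : ℝ)) • θ := by
        rw [← neg_sub, hl, neg_smul]
      have hc1 : c ∈ XiOne d Θ L V :=
        transfer hL1 hLmono hs0 hs1 hsep hR0 hscale hV hθΘ hθ0 hθV hbθ hcθ hcb hbXi.1
      have hc2 : c ∉ ⋃ U ∈ {U : Submodule ℝ (EuclideanSpace ℝ (Fin d)) |
          QLat d Θ U ∧ V < U}, XiOne d Θ L U := by
        intro hc
        obtain ⟨U', hU'⟩ := Set.mem_iUnion.1 hc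
        obtain ⟨hU'S, hcU'⟩ := Set.mem_iUnion.1 hU'
        obtain ⟨⟨u', hU'QL⟩, hVU'⟩ := hU'S
        have hθU' : θ ∈ U' := hVU'.le hθV
        have hbU' : b ∈ XiOne d Θ L U' :=
          transfer hL1 hLmono hs0 hs1 hsep hR0 hscale hU'QL hθΘ hθ0 hθU' hcθ hbθ hl hcU'
        exact hbXi.2 (Set.mem_biUnion ⟨⟨u', hU'QL⟩, hVU'⟩ hbU')
      have hcV : c - ξ ∈ V := by
        have h5 : c - ξ = (c - b) + (b - ξ) := by abel
        rw [h5, hcb]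
        exact Submodule.add_mem _ (Submodule.smul_mem _ _ hθV) hbV
      exact ⟨⟨hc1, hc2⟩, hcV⟩
  refine ⟨main, ?_⟩
  intro η hη η' hη'
  obtain ⟨⟨hη1, -⟩, hηV⟩ := main η hη
  obtain ⟨⟨hη'1, -⟩, hη'V⟩ := main η' hη'
  have hdiff : η - η' ∈ V := by
    have h5 : η - η' = (η - ξ) - (η' - ξ) := by abel
    rw [h5]
    exact Submodule.sub_mem _ hηV hη'V
  have hP : (Submodule.orthogonalProjectionOnto V (η - η') : EuclideanSpace ℝ (Fin d)) = η - η' :=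
    Submodule.starProjection_eq_self_iff.2 hdiff
  have hsplit : (Submodule.orthogonalProjectionOnto V (η - η') : EuclideanSpace ℝ (Fin d)) =
      (Submodule.orthogonalProjectionOnto V η : EuclideanSpace ℝ (Fin d)) -
      (Submodule.orthogonalProjectionOnto V η' : EuclideanSpace ℝ (Fin d)) := by
    rw [map_sub]
    rfl
  have h1 := xione_proj_bound hL1 hLmono hV hη1
  have h2 := xione_proj_bound hL1 hLmono hV hη'1
  calc ‖η - η'‖ = ‖(Submodule.orthogonalProjectionOnto V η : EuclideanSpace ℝ (Fin d)) -
        (Submodule.orthogonalProjectionOnto V η' : EuclideanSpace ℝ (Fin d))‖ := by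
        rw [← hsplit, hP]
    _ ≤ ‖(Submodule.orthogonalProjectionOnto V η : EuclideanSpace ℝ (Fin d))‖ +
        ‖(Submodule.orthogonalProjectionOnto V η' : EuclideanSpace ℝ (Fin d))‖ := norm_sub_le _ _
    _ ≤ Real.sqrt m * L m + Real.sqrt m * L m := add_le_add h1 h2
    _ = 2 * Real.sqrt m * L m := by ring
end
end

section
/- Let E be an n-dimensional real inner product space, let μ₁, …, μ_n be a basis of E, and let θ = Σ_{j=1}^n b_j μ_j with b_j ∈ ℝ. Suppose that ⟨η, θ⟩ ≠ 0 for every η ∈ E satisfying ⟨η, μ_j⟩ > 0 for all j. Then either b_j ≥ 0 for all j, or b_j ≤ 0 for all j. -/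
open scoped RealInnerProductSpace

theorem same_sign_coefficients (E : Type*) [NormedAddCommGroup E]
    [InnerProductSpace ℝ E] [FiniteDimensional ℝ E]
    (n : ℕ) (hn : Module.finrank ℝ E = n)
    (μ : Fin n → E) (hli : LinearIndependent ℝ μ)
    (hsp : Submodule.span ℝ (Set.range μ) = ⊤)
    (θ : E) (b : Fin n → ℝ) (hθ : θ = ∑ j, b j • μ j)
    (h : ∀ η : E, (∀ j, 0 < ⟪η, μ j⟫) → ⟪η, θ⟫ ≠ 0) :
    (∀ j, 0 ≤ b j) ∨ (∀ j, b j ≤ 0) := by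
  by_contra hcon
  push_neg at hcon
  obtain ⟨⟨j, hj⟩, ⟨k, hk⟩⟩ := hcon
  -- basis
  let B : Module.Basis (Fin n) ℝ E := Module.Basis.mk hli (by rw [hsp])
  have hB : ∀ i, B i = μ i := fun i => Module.Basis.mk_apply hli _ i
  -- dual basis via Riesz representation
  let ν : Fin n → E := fun i =>
    (InnerProductSpace.toDual ℝ E).symm (LinearMap.toContinuousLinearMap (B.coord i))
  have hν : ∀ i m, ⟪ν i, μ m⟫ = if m = i then 1 else 0 := by
    intro i m
    have h1 : ⟪ν i, μ m⟫ = (LinearMap.toContinuousLinearMap (B.coord i)) (μ m) := by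
      simp [ν, InnerProductSpace.toDual_symm_apply]
    rw [h1]
    have : (LinearMap.toContinuousLinearMap (B.coord i)) (μ m) = B.repr (μ m) i := by
      simp [Module.Basis.coord_apply]
    rw [this, ← hB m, B.repr_self, Finsupp.single_apply]
  set P : ℝ := ∑ i, max (b i) 0 with hPdef
  set N : ℝ := ∑ i, max (-(b i)) 0 with hNdef
  have hP : 0 < P := by
    apply Finset.sum_pos' (fun i _ => le_max_right _ _)
    exact ⟨k, Finset.mem_univ k, by simp [lt_max_iff]; exact hk⟩
  have hN : 0 < N := by
    apply Finset.sum_pos' (fun i _ => le_max_right _ _)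
    exact ⟨j, Finset.mem_univ j, by simp [lt_max_iff]; linarith⟩
  set t : Fin n → ℝ := fun i => if 0 < b i then N else if b i < 0 then P else 1 with htdef
  have ht : ∀ i, 0 < t i := by
    intro i
    simp only [htdef]
    split_ifs with h1 h2
    · exact hN
    · exact hP
    · exact one_pos
  set η : E := ∑ i, t i • ν i with hηdef
  have hηin : ∀ m, ⟪η, μ m⟫ = t m := by
    intro m
    rw [hηdef, sum_inner]
    simp only [real_inner_smul_left, hν]
    simp [Finset.sum_ite_eq]
  have key : ⟪η, θ⟫ = 0 := by
    rw [hθ, inner_sum]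
    simp only [real_inner_smul_right, hηin]
    have hterm : ∀ i, b i * t i = N * max (b i) 0 - P * max (-(b i)) 0 := by
      intro i
      simp only [htdef]
      rcases lt_trichotomy (b i) 0 with hlt | heq | hgt
      · rw [if_neg (by linarith), if_pos hlt,
          max_eq_right (le_of_lt hlt), max_eq_left (by linarith)]
        ring
      · simp [heq]
      · rw [if_pos hgt, max_eq_left (le_of_lt hgt), max_eq_right (by linarith)]
        ring
    calc ∑ i, b i * t i = ∑ i, (N * max (b i) 0 - P * max (-(b i)) 0) := by
          exact Finset.sum_congr rfl fun i _ => hterm i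
      _ = N * P - P * N := by
          rw [Finset.sum_sub_distrib, ← Finset.mul_sum, ← Finset.mul_sum]
      _ = 0 := by ring
  exact h η (fun m => (hηin m) ▸ ht m) key
end

section
/- Let c ∈ ℂ, r > 0, and let U ⊆ ℂ be an open set containing the closed disc {z : |z − c| ≤ r}. Let f : ℂ → ℂ be analytic on U with f(z) ≠ 0 for every z on the circle |z − c| = r. Then the set Z of zeros of f in the open disc {z : |z − c| < r} is finite, and for every natural number m, (1/(2πi)) · ∮_{|z−c|=r} z^m · f'(z)/f(z) dz = Σ_{ζ ∈ Z} ord_ζ(f) · ζ^m, where ord_ζ(f) denotes the order of vanishing of f at ζ and the contour integral is taken counterclockwise over the circle |z − c| = r. -/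
open Metric

open Filter in

lemma circleIntegral_finset_sum {ι : Type*} (s : Finset ι) (F : ι → ℂ → ℂ) (c : ℂ) (R : ℝ)
    (h : ∀ i ∈ s, CircleIntegrable (F i) c R) :
    (∮ z in C(c, R), ∑ i ∈ s, F i z) = ∑ i ∈ s, ∮ z in C(c, R), F i z := by
  simp only [circleIntegral, Finset.smul_sum]
  rw [intervalIntegral.integral_finset_sum]
  exact fun i hi => (h i hi).out

lemma circleIntegral_add' {f g : ℂ → ℂ} {c : ℂ} {R : ℝ} (hf : CircleIntegrable f c R)
    (hg : CircleIntegrable g c R) :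
    (∮ z in C(c, R), (f z + g z)) = (∮ z in C(c, R), f z) + ∮ z in C(c, R), g z := by
  simp only [circleIntegral, smul_add, intervalIntegral.integral_add hf.out hg.out]

theorem weighted_argument_principle (c : ℂ) (r : ℝ) (hr : 0 < r)
    (U : Set ℂ) (hU : IsOpen U) (hcr : closedBall c r ⊆ U)
    (f : ℂ → ℂ) (hf : DifferentiableOn ℂ f U)
    (hne : ∀ z ∈ sphere c r, f z ≠ 0) :
    ∃ (Z : Finset ℂ) (ord : ℂ → ℕ),
      (↑Z : Set ℂ) = {z | z ∈ ball c r ∧ f z = 0} ∧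
      (∀ ζ ∈ Z, ∃ g : ℂ → ℂ, AnalyticAt ℂ g ζ ∧ g ζ ≠ 0 ∧
        ∀ᶠ z in nhds ζ, f z = (z - ζ) ^ ord ζ * g z) ∧
      ∀ m : ℕ,
        (2 * (Real.pi : ℂ) * Complex.I)⁻¹ *
            (∮ z in C(c, r), z ^ m * deriv f z / f z) =
          ∑ ζ ∈ Z, (ord ζ : ℂ) * ζ ^ m := by
  classical
  open Filter in
  obtain ⟨δ, δpos, hδ⟩ := (isCompact_closedBall c r).exists_cthickening_subset_open hU hcr
  set R := δ + r with hRdef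
  have hrR : r < R := by simp [hRdef]; linarith
  have hBU : ball c R ⊆ U := by
    refine subset_trans ?_ hδ
    rw [cthickening_closedBall δpos.le hr.le c]
    exact ball_subset_closedBall
  set B := ball c R with hBdef
  have hBo : IsOpen B := isOpen_ball
  have hsubB : closedBall c r ⊆ B := closedBall_subset_ball hrR
  have hfa : AnalyticOnNhd ℂ f B := (hf.mono hBU).analyticOnNhd hBo
  have hnev : ∀ z ∈ B, ¬ (f =ᶠ[nhds z] 0) := by
    intro z hz hev
    have h0 := hfa.eqOn_zero_of_preconnected_of_eventuallyEq_zero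
      (convex_ball c R).isPreconnected hz hev
    have hcmem : (c + r) ∈ sphere c r := by
      simp [Complex.dist_eq, abs_of_pos hr]
    exact hne _ hcmem (h0 (hsubB (sphere_subset_closedBall hcmem)))
  set S : Set ℂ := {z | z ∈ ball c r ∧ f z = 0} with hSdef
  have hSsub : S ⊆ B := fun z hz => (ball_subset_ball hrR.le) hz.1
  have hSiso : ∀ ζ ∈ S, ∀ᶠ z in nhdsWithin ζ {ζ}ᶜ, f z ≠ 0 := by
    intro ζ hζ
    exact (hfa ζ (hSsub hζ)).eventually_eq_zero_or_eventually_ne_zero.resolve_left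
      (hnev ζ (hSsub hζ))
  have hScb : S = closedBall c r ∩ f ⁻¹' {0} := by
    ext z
    simp only [hSdef, Set.mem_setOf_eq, Set.mem_inter_iff, Set.mem_preimage,
      Set.mem_singleton_iff]
    constructor
    · exact fun h => ⟨ball_subset_closedBall h.1, h.2⟩
    · rintro ⟨h1, h2⟩
      refine ⟨?_, h2⟩
      rcases lt_or_eq_of_le (mem_closedBall.1 h1) with h | h
      · exact mem_ball.2 h
      · exact absurd h2 (hne z (mem_sphere.2 h))
  have hSfin : S.Finite := by
    have hcpt : IsCompact S := by
      rw [hScb]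
      exact (isCompact_closedBall c r).of_isClosed_subset
        ((hf.continuousOn.mono hcr).preimage_isClosed_of_isClosed
          Metric.isClosed_closedBall isClosed_singleton) Set.inter_subset_left
    refine hcpt.finite (isDiscrete_iff_discreteTopology.2 (discreteTopology_subtype_iff.2 fun ζ hζ => ?_))
    rw [inf_principal_eq_bot]
    filter_upwards [hSiso ζ hζ] with z hz hzS
    exact hz hzS.2
  have key : ∀ ζ ∈ S, ∃ n : ℕ, 0 < n ∧ ∃ g : ℂ → ℂ, AnalyticAt ℂ g ζ ∧ g ζ ≠ 0 ∧
      ∀ᶠ z in nhds ζ, f z = (z - ζ) ^ n * g z := by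
    intro ζ hζ
    have hA : AnalyticAt ℂ f ζ := hfa ζ (hSsub hζ)
    have hord : analyticOrderAt f ζ ≠ ⊤ := fun h => hnev ζ (hSsub hζ) (analyticOrderAt_eq_top.1 h)
    obtain ⟨n, hn⟩ := Option.ne_none_iff_exists'.1 hord
    obtain ⟨g, hg1, hg2, hg3⟩ := (hA.analyticOrderAt_eq_natCast (n := n)).1 hn
    have hg3' : ∀ᶠ z in nhds ζ, f z = (z - ζ) ^ n * g z := by
      filter_upwards [hg3] with z hz using by simpa [smul_eq_mul] using hz
    refine ⟨n, ?_, g, hg1, hg2, hg3'⟩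
    rcases Nat.eq_zero_or_pos n |>.symm with h | h
    · exact h
    · exfalso
      have := hg3'.self_of_nhds
      rw [hSdef] at hζ
      rw [h, pow_zero, one_mul, hζ.2] at this
      exact hg2 this.symm
  choose! n npos g hg1 hg2 hg3 using key
  set B := ball c R with hBdef
  have hBo : IsOpen B := isOpen_ball
  have hsubB : closedBall c r ⊆ B := closedBall_subset_ball hrR
  set Z : Finset ℂ := hSfin.toFinset with hZdef
  have hZS : ∀ ζ, ζ ∈ Z ↔ ζ ∈ S := fun ζ => hSfin.mem_toFinset
  set P : ℂ → ℂ := fun z => ∏ ζ ∈ Z, (z - ζ) ^ n ζ with hPdef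
  set Q : ℂ → ℂ → ℂ := fun ζ z => ∏ ζ' ∈ Z.erase ζ, (z - ζ') ^ n ζ' with hQdef
  set h : ℂ → ℂ := fun z => if z ∈ S then g z z / Q z z else f z / P z with hhdef
  have hPfact : ∀ ζ ∈ Z, ∀ z, P z = (z - ζ) ^ n ζ * Q ζ z := fun ζ hζ z =>
    (Finset.mul_prod_erase Z _ hζ).symm
  have hQne : ∀ ζ ∈ Z, Q ζ ζ ≠ 0 := by
    intro ζ hζ
    rw [hQdef]
    refine Finset.prod_ne_zero_iff.2 fun ζ' hζ' => ?_
    exact pow_ne_zero _ (sub_ne_zero.2 (Ne.symm (Finset.ne_of_mem_erase hζ')))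
  have hPne : ∀ z, z ∉ S → P z ≠ 0 := by
    intro z hz
    refine Finset.prod_ne_zero_iff.2 fun ζ hζ => ?_
    exact pow_ne_zero _ (sub_ne_zero.2 fun e => hz (e ▸ (hZS ζ).1 hζ))
  have hPz : ∀ ζ ∈ S, P ζ = 0 := by
    intro ζ hζ
    rw [hPfact ζ ((hZS ζ).2 hζ) ζ, sub_self, zero_pow (npos ζ hζ).ne', zero_mul]
  have hQdiff : ∀ ζ z, DifferentiableAt ℂ (Q ζ) z := by
    intro ζ z
    exact DifferentiableAt.fun_finsetProd fun ζ' _ =>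
      ((differentiableAt_id.sub_const ζ').fun_pow _)
  have hPdiff : ∀ z, DifferentiableAt ℂ P z := by
    intro z
    exact DifferentiableAt.fun_finsetProd fun ζ' _ =>
      ((differentiableAt_id.sub_const ζ').fun_pow _)
  have heq : ∀ z, f z = P z * h z := by
    intro z
    by_cases hz : z ∈ S
    · rw [hSdef] at hz; rw [hz.2, hPz z (hSdef ▸ hz), zero_mul]
    · rw [hhdef]; simp only [if_neg hz]
      rw [mul_comm, div_mul_cancel₀ _ (hPne z hz)]
  have hQanal : ∀ ζ z, AnalyticAt ℂ (Q ζ) z := by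
    intro ζ z
    apply Finset.analyticAt_fun_prod
    intro ζ' _
    exact ((analyticAt_id.sub analyticAt_const).pow _)
  have hh_near : ∀ ζ ∈ S, h =ᶠ[nhds ζ] fun z => g ζ z / Q ζ z := by
    intro ζ hζ
    have hSd : IsClosed (S \ {ζ}) := (hSfin.subset Set.diff_subset).isClosed
    have hev1 : ∀ᶠ z in nhds ζ, z ∉ S \ {ζ} :=
      hSd.isOpen_compl.mem_nhds (by simp)
    filter_upwards [hev1, hg3 ζ hζ] with z hz1 hz2
    by_cases hzζ : z = ζ
    · subst hzζ
      rw [hhdef]; simp only [if_pos hζ]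
    · have hzS : z ∉ S := fun hzS => hz1 ⟨hzS, hzζ⟩
      rw [hhdef]; simp only [if_neg hzS]
      rw [hz2, hPfact ζ ((hZS ζ).2 hζ) z,
        mul_div_mul_left _ _ (pow_ne_zero _ (sub_ne_zero.2 hzζ))]
  have hh_analS : ∀ ζ ∈ S, AnalyticAt ℂ h ζ := fun ζ hζ =>
    (((hg1 ζ hζ).div (hQanal ζ ζ) (hQne ζ ((hZS ζ).2 hζ))).congr (hh_near ζ hζ).symm)
  have hh_ne : ∀ z ∈ closedBall c r, h z ≠ 0 := by
    intro z hz
    by_cases hzS : z ∈ S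
    · rw [hhdef]; simp only [if_pos hzS]
      exact div_ne_zero (hg2 z hzS) (hQne z ((hZS z).2 hzS))
    · rw [hhdef]; simp only [if_neg hzS]
      refine div_ne_zero ?_ (hPne z hzS)
      intro hfz
      rcases lt_or_eq_of_le (mem_closedBall.1 hz) with hlt | heq'
      · exact hzS (hSdef ▸ ⟨mem_ball.2 hlt, hfz⟩)
      · exact hne z (mem_sphere.2 heq') hfz
  have hSc : IsClosed S := hSfin.isClosed
  have hh_diff : ∀ z ∈ B, DifferentiableAt ℂ h z := by
    intro z hz
    by_cases hzS : z ∈ S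
    · exact (hh_analS z hzS).differentiableAt
    · have hev : h =ᶠ[nhds z] fun w => f w / P w := by
        filter_upwards [hSc.isOpen_compl.mem_nhds hzS] with w hw
        rw [hhdef]; simp only [if_neg hw]
      refine (DifferentiableAt.congr_of_eventuallyEq ?_ hev)
      exact ((hfa z hz).differentiableAt).div (hPdiff z) (hPne z hzS)
  have hhDO : DifferentiableOn ℂ h B := fun z hz => (hh_diff z hz).differentiableWithinAt
  have hhA : AnalyticOnNhd ℂ h B := hhDO.analyticOnNhd hBo
  have hconth : ContinuousOn h B := fun z hz =>
    (hh_diff z hz).continuousAt.continuousWithinAt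
  set Ω : Set ℂ := B ∩ h ⁻¹' ({0}ᶜ) with hΩdef
  have hΩo : IsOpen Ω := hconth.isOpen_inter_preimage hBo isOpen_compl_singleton
  have hΩsub : closedBall c r ⊆ Ω := fun z hz => ⟨hsubB hz, hh_ne z hz⟩
  have hderivhA : AnalyticOnNhd ℂ (deriv h) B := hhA.deriv
  have main : ∀ m : ℕ, (∮ z in C(c, r), z ^ m * deriv f z / f z) =
      (2 * (Real.pi : ℂ) * Complex.I) * ∑ ζ ∈ Z, (n ζ : ℂ) * ζ ^ m := by
    intro m
    set ψ : ℂ → ℂ := fun z => z ^ m * deriv h z / h z with hψdef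
    have hψ_diff : ∀ z ∈ Ω, DifferentiableAt ℂ ψ z := by
      intro z hz
      exact ((differentiableAt_pow m).mul ((hderivhA z hz.1).differentiableAt)).div
        (hh_diff z hz.1) hz.2
    have hψ0 : (∮ z in C(c, r), ψ z) = 0 :=
      Complex.circleIntegral_eq_zero_of_differentiable_on_off_countable hr.le
        Set.countable_empty
        (fun z hz => (hψ_diff z (hΩsub hz)).continuousAt.continuousWithinAt)
        (fun z hz => hψ_diff z (hΩsub (ball_subset_closedBall hz.1)))
    have hζb : ∀ ζ ∈ Z, ζ ∈ ball c r := fun ζ hζ => (hSdef ▸ (hZS ζ).1 hζ).1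
    have hzsub : ∀ ζ ∈ Z, ∀ z ∈ sphere c r, z - ζ ≠ 0 := by
      intro ζ hζ z hz
      refine sub_ne_zero.2 fun e => ?_
      rw [← e] at hζ
      exact (mem_ball.1 (hζb z hζ)).ne (mem_sphere.1 hz)
    have hCF : ∀ ζ ∈ Z, (∮ z in C(c, r), (n ζ : ℂ) * (z ^ m / (z - ζ))) =
        (2 * (Real.pi : ℂ) * Complex.I) * ((n ζ : ℂ) * ζ ^ m) := by
      intro ζ hζ
      have hcf := Complex.circleIntegral_sub_inv_smul_of_differentiable_on_off_countable
        (f := fun z => z ^ m) (s := ∅) Set.countable_empty (hζb ζ hζ)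
        ((continuous_pow m).continuousOn) (fun x _ => differentiableAt_pow m)
      have hfe : (fun z => (z - ζ)⁻¹ • (z ^ m : ℂ)) = fun z => z ^ m / (z - ζ) := by
        funext z; simp [smul_eq_mul, div_eq_mul_inv, mul_comm]
      rw [hfe] at hcf
      rw [circleIntegral.integral_const_mul, hcf, smul_eq_mul]
      ring
    have hint1 : ∀ ζ ∈ Z, CircleIntegrable (fun z => (n ζ : ℂ) * (z ^ m / (z - ζ))) c r := by
      intro ζ hζ
      refine ContinuousOn.circleIntegrable hr.le ?_
      refine continuousOn_const.mul (((continuous_pow m).continuousOn).div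
        ((continuous_id.sub continuous_const).continuousOn) ?_)
      exact fun z hz => hzsub ζ hζ z hz
    have hintS : CircleIntegrable (fun z => ∑ ζ ∈ Z, (n ζ : ℂ) * (z ^ m / (z - ζ))) c r := by
      refine ContinuousOn.circleIntegrable hr.le ?_
      refine continuousOn_finset_sum Z fun ζ hζ => ?_
      refine continuousOn_const.mul (((continuous_pow m).continuousOn).div
        ((continuous_id.sub continuous_const).continuousOn) ?_)
      exact fun z hz => hzsub ζ hζ z hz
    have hintψ : CircleIntegrable ψ c r := by
      refine ContinuousOn.circleIntegrable hr.le fun z hz => ?_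
      exact (hψ_diff z (hΩsub (sphere_subset_closedBall hz))).continuousAt.continuousWithinAt
    have hEq : Set.EqOn (fun z => z ^ m * deriv f z / f z)
        (fun z => (∑ ζ ∈ Z, (n ζ : ℂ) * (z ^ m / (z - ζ))) + ψ z) (sphere c r) := by
      intro z hz
      have hzS : z ∉ S := fun hzS =>
        (mem_ball.1 (hSdef ▸ hzS).1).ne (mem_sphere.1 hz)
      have hzB : z ∈ B := hsubB (sphere_subset_closedBall hz)
      have hPz_ne : P z ≠ 0 := hPne z hzS
      have hhz_ne : h z ≠ 0 := hh_ne z (sphere_subset_closedBall hz)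
      have hPder : HasDerivAt P
          (∑ ζ ∈ Z, Q ζ z * ((n ζ : ℂ) * (z - ζ) ^ (n ζ - 1))) z := by
        have hd := HasDerivAt.fun_finsetProd (u := Z) (f := fun ζ w => (w - ζ) ^ n ζ)
          (f' := fun ζ => (n ζ : ℂ) * (z - ζ) ^ (n ζ - 1)) (x := z)
          (fun ζ _ => by simpa using (((hasDerivAt_id z).sub_const ζ).fun_pow (n ζ)))
        simpa [smul_eq_mul] using hd
      have hfder : deriv f z =
          (∑ ζ ∈ Z, Q ζ z * ((n ζ : ℂ) * (z - ζ) ^ (n ζ - 1))) * h z + P z * deriv h z := by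
        have hfPh : f = fun w => P w * h w := funext heq
        rw [hfPh, deriv_fun_mul (hPdiff z) (hh_diff z hzB), hPder.deriv]
      have hterm : ∀ ζ ∈ Z,
          z ^ m * (Q ζ z * ((n ζ : ℂ) * (z - ζ) ^ (n ζ - 1))) / P z
            = (n ζ : ℂ) * (z ^ m / (z - ζ)) := by
        intro ζ hζ
        have hzζ : z - ζ ≠ 0 := hzsub ζ hζ z hz
        have hQz : Q ζ z ≠ 0 := by
          have := hPfact ζ hζ z ▸ hPz_ne
          exact right_ne_zero_of_mul this
        have hpow : (z - ζ) ^ n ζ = (z - ζ) ^ (n ζ - 1) * (z - ζ) := by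
          rw [← pow_succ, Nat.sub_add_cancel (npos ζ ((hZS ζ).1 hζ))]
        rw [hPfact ζ hζ z, hpow]
        have hp1 : (z - ζ) ^ (n ζ - 1) ≠ 0 := pow_ne_zero _ hzζ
        field_simp
      have hsum : z ^ m * (∑ ζ ∈ Z, Q ζ z * ((n ζ : ℂ) * (z - ζ) ^ (n ζ - 1))) / P z
          = ∑ ζ ∈ Z, (n ζ : ℂ) * (z ^ m / (z - ζ)) := by
        rw [Finset.mul_sum, Finset.sum_div]
        exact Finset.sum_congr rfl hterm
      show z ^ m * deriv f z / f z = _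
      rw [hfder, heq z]
      have hmain : ∀ D : ℂ, z ^ m * (D * h z + P z * deriv h z) / (P z * h z)
          = z ^ m * D / P z + z ^ m * deriv h z / h z := by
        intro D
        field_simp
      rw [hmain, hsum]
    calc (∮ z in C(c, r), z ^ m * deriv f z / f z)
        = ∮ z in C(c, r), ((∑ ζ ∈ Z, (n ζ : ℂ) * (z ^ m / (z - ζ))) + ψ z) :=
          circleIntegral.integral_congr hr.le hEq
      _ = (∮ z in C(c, r), ∑ ζ ∈ Z, (n ζ : ℂ) * (z ^ m / (z - ζ)))
            + ∮ z in C(c, r), ψ z := circleIntegral_add' hintS hintψ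
      _ = (∑ ζ ∈ Z, ∮ z in C(c, r), (n ζ : ℂ) * (z ^ m / (z - ζ))) + 0 := by
          rw [hψ0, circleIntegral_finset_sum Z _ c r hint1]
      _ = ∑ ζ ∈ Z, (2 * (Real.pi : ℂ) * Complex.I) * ((n ζ : ℂ) * ζ ^ m) := by
          rw [add_zero]; exact Finset.sum_congr rfl hCF
      _ = (2 * (Real.pi : ℂ) * Complex.I) * ∑ ζ ∈ Z, (n ζ : ℂ) * ζ ^ m := by
          rw [Finset.mul_sum]
  refine ⟨Z, n, ?_, ?_, ?_⟩
  · rw [hZdef, hSfin.coe_toFinset, hSdef]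
  · intro ζ hζ
    exact ⟨g ζ, hg1 ζ ((hZS ζ).1 hζ), hg2 ζ ((hZS ζ).1 hζ), hg3 ζ ((hZS ζ).1 hζ)⟩
  · intro m
    rw [main m, ← mul_assoc, inv_mul_cancel₀ Complex.two_pi_I_ne_zero, one_mul]
end
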